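/- Let θ : Ω → ℝ_{>0} be C¹ on a bounded interval Ω, let b > 0, 0 ≤ m ≤ (b+4)/2, and suppose there exists b₀ ∈ Ω with θ(b₀) ≤ B. If ∫_Ω v(x) dx ≤ M₁, ∫_Ω (θ(x)-1)⁴ dx ≤ M₂ and v(x) ≥ V₁ > 0 on Ω, then |θ(x)^m - θ(b₀)^m| ≤ C · (∫_Ω κ(v,θ)θ_x²/(vθ²) dx)^{1/2} for all x ∈ Ω, where κ(v,θ) = κ₁ + κ₂vθ^b and C depends only on m, b, κ₁, κ₂, B, M₁, M₂, V₁ and |Ω|. -/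

import Mathlib

open MeasureTheory Set

private lemma rpow_le_add_of_between {x t₁ t₂ : ℝ} (e : ℝ) (h1 : 0 < t₁) (hx1 : t₁ ≤ x)
    (hx2 : x ≤ t₂) : x ^ e ≤ t₁ ^ e + t₂ ^ e := by
  have hx : 0 < x := lt_of_lt_of_le h1 hx1
  rcases le_or_gt 0 e with he | he
  · have h := Real.rpow_le_rpow hx.le hx2 he
    have h2 : (0:ℝ) < t₁ ^ e := Real.rpow_pos_of_pos h1 e
    linarith
  · have h := Real.rpow_le_rpow_of_nonpos h1 hx1 he.le
    have h2 : (0:ℝ) < t₂ ^ e := Real.rpow_pos_of_pos (h1.trans_le (hx1.trans hx2)) e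
    linarith

private lemma diss_pointwise (m b κ₁ κ₂ : ℝ) (hm0 : 0 ≤ m) (hm : 2 * m ≤ b + 4)
    (hκ₁ : 0 < κ₁) (hκ₂ : 0 < κ₂) {v θ : ℝ} (hv : 0 < v) (hθ : 0 < θ) :
    v * θ ^ (2 * m) / (κ₁ + κ₂ * v * θ ^ b) ≤
      2 ^ (2 * m) * v / κ₁ + 16 * (θ - 1) ^ 4 / κ₂ := by
  have hθb : (0:ℝ) < θ ^ b := Real.rpow_pos_of_pos hθ b
  have hθm : (0:ℝ) < θ ^ (2 * m) := Real.rpow_pos_of_pos hθ _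
  have hκ : 0 < κ₁ + κ₂ * v * θ ^ b := by positivity
  rcases le_or_gt θ 2 with h2 | h2
  · have t2 : θ ^ (2 * m) ≤ 2 ^ (2 * m) := Real.rpow_le_rpow hθ.le h2 (by positivity)
    have h4 : (0:ℝ) ≤ 16 * (θ - 1) ^ 4 / κ₂ := by positivity
    have step1 : v * θ ^ (2 * m) / (κ₁ + κ₂ * v * θ ^ b) ≤ 2 ^ (2 * m) * v / κ₁ := by
      rw [div_le_div_iff₀ hκ hκ₁]
      nlinarith [mul_pos (mul_pos hκ₂ hv) hθb, mul_pos hv hθm,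
        mul_le_mul_of_nonneg_left t2 hv.le,
        mul_pos (mul_pos (mul_pos hκ₂ hv) hθb) (mul_pos hv (Real.rpow_pos_of_pos two_pos (2*m)))]
    linarith
  · have h1θ : (1:ℝ) ≤ θ := by linarith
    have key : v * θ ^ (2 * m) / (κ₁ + κ₂ * v * θ ^ b) ≤ θ ^ (2 * m - b) / κ₂ := by
      rw [div_le_div_iff₀ hκ hκ₂, Real.rpow_sub hθ, div_mul_eq_mul_div, le_div_iff₀ hθb]
      nlinarith [mul_pos hθm hκ₁]
    have key2 : θ ^ (2 * m - b) ≤ θ ^ (4:ℝ) :=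
      Real.rpow_le_rpow_of_exponent_le h1θ (by linarith)
    have key3 : θ ^ (4:ℝ) = θ ^ (4:ℕ) := by
      rw [show (4:ℝ) = ((4:ℕ):ℝ) by norm_num, Real.rpow_natCast]
    have key4 : θ ^ (4:ℕ) ≤ 16 * (θ - 1) ^ 4 := by
      have hle : θ ≤ 2 * (θ - 1) := by linarith
      have := pow_le_pow_left₀ hθ.le hle 4
      nlinarith [this]
    have h5 : (0:ℝ) ≤ 2 ^ (2 * m) * v / κ₁ := by positivity
    have : θ ^ (2 * m - b) / κ₂ ≤ 16 * (θ - 1) ^ 4 / κ₂ := by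
      gcongr
      calc θ ^ (2 * m - b) ≤ θ ^ (4:ℝ) := key2
        _ = θ ^ (4:ℕ) := key3
        _ ≤ 16 * (θ - 1) ^ 4 := key4
    linarith

/-- Corollary 2.5. -/
theorem temperature_oscillation_bound
    (m b κ₁ κ₂ B M₁ M₂ V₁ L : ℝ)
    (hb : 0 < b) (hm0 : 0 ≤ m) (hm : m ≤ (b + 4) / 2)
    (hκ₁ : 0 < κ₁) (hκ₂ : 0 < κ₂) (hB : 0 < B)
    (hM₁ : 0 < M₁) (hM₂ : 0 < M₂) (hV₁ : 0 < V₁) (hL : 0 < L) :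
    ∃ C > 0, ∀ (a c : ℝ) (v θ θ' : ℝ → ℝ) (b₀ : ℝ),
      a ≤ c → c - a ≤ L →
      (∀ x ∈ Icc a c, HasDerivAt θ (θ' x) x) →
      ContinuousOn θ' (Icc a c) →
      (∀ x ∈ Icc a c, 0 < θ x) →
      (∀ x ∈ Icc a c, V₁ ≤ v x) →
      IntegrableOn v (Icc a c) →
      (∫ x in Icc a c, v x) ≤ M₁ →
      IntegrableOn (fun x => (θ x - 1) ^ 4) (Icc a c) →
      (∫ x in Icc a c, (θ x - 1) ^ 4) ≤ M₂ →
      b₀ ∈ Icc a c → θ b₀ ≤ B →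
      ∀ x ∈ Icc a c,
        |θ x ^ m - θ b₀ ^ m| ≤
          C * Real.sqrt (∫ x in Icc a c,
            (κ₁ + κ₂ * v x * θ x ^ b) * (θ' x) ^ 2 / (v x * θ x ^ 2)) := by
  refine ⟨m * Real.sqrt (2 ^ (2 * m) * M₁ / κ₁ + 16 * M₂ / κ₂) + 1, by positivity, ?_⟩
  intro a c v θ θ' b₀ hac hLc hθd hθ'c hθpos hvV hvint hvM hθ4int hθ4M hb₀ hθB x hx
  have hIcc : MeasurableSet (Icc a c) := measurableSet_Icc
  set μ := volume.restrict (Icc a c) with hμdef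
  have hμfin : μ univ < ⊤ := by
    rw [hμdef, Measure.restrict_apply_univ, Real.volume_Icc]
    exact ENNReal.ofReal_lt_top
  haveI : IsFiniteMeasure μ := ⟨hμfin⟩
  have hθc : ContinuousOn θ (Icc a c) := fun y hy => (hθd y hy).continuousAt.continuousWithinAt
  have hvpos : ∀ y ∈ Icc a c, 0 < v y := fun y hy => hV₁.trans_le (hvV y hy)
  set κf : ℝ → ℝ := fun y => κ₁ + κ₂ * v y * θ y ^ b with hκdef
  have hκpos : ∀ y ∈ Icc a c, 0 < κf y := by
    intro y hy
    have h1 := hθpos y hy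
    have h2 := hvpos y hy
    have : (0:ℝ) < θ y ^ b := Real.rpow_pos_of_pos h1 b
    simp only [hκdef]
    positivity
  set F : ℝ → ℝ := fun y => Real.sqrt (v y * θ y ^ (2 * m) / κf y) with hFdef
  set G : ℝ → ℝ := fun y => Real.sqrt (κf y * (θ' y) ^ 2 / (v y * θ y ^ 2)) with hGdef
  -- measurability
  have hvmeas : AEMeasurable v μ := hvint.aemeasurable
  have hθmeas : AEMeasurable θ μ := hθc.aemeasurable hIcc
  have hθ'meas : AEMeasurable θ' μ := hθ'c.aemeasurable hIcc
  have hθrpow : ∀ e : ℝ, AEMeasurable (fun y => θ y ^ e) μ := fun e =>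
    (hθc.rpow_const (fun y hy => Or.inl (hθpos y hy).ne')).aemeasurable hIcc
  have hκmeas : AEMeasurable κf μ :=
    aemeasurable_const.add ((aemeasurable_const.mul hvmeas).mul (hθrpow b))
  have hFmeas : AEMeasurable F μ :=
    (Real.continuous_sqrt.measurable.comp_aemeasurable
      (((hvmeas.mul (hθrpow (2 * m)))).div hκmeas))
  have hGmeas : AEMeasurable G μ :=
    (Real.continuous_sqrt.measurable.comp_aemeasurable
      ((hκmeas.mul (hθ'meas.pow aemeasurable_const)).div
        (hvmeas.mul (hθmeas.pow aemeasurable_const))))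
  -- extremes
  have hne : (Icc a c).Nonempty := nonempty_Icc.mpr hac
  obtain ⟨z₁, hz₁, hmin⟩ := isCompact_Icc.exists_isMinOn hne hθc
  obtain ⟨z₂, hz₂, hmax⟩ := isCompact_Icc.exists_isMaxOn hne hθc
  obtain ⟨z₃, hz₃, hmax'⟩ :=
    isCompact_Icc.exists_isMaxOn hne (continuous_abs.comp_continuousOn hθ'c)
  have ht₁ : 0 < θ z₁ := hθpos z₁ hz₁
  have ht₂ : 0 < θ z₂ := hθpos z₂ hz₂
  have hminle : ∀ y ∈ Icc a c, θ z₁ ≤ θ y := fun y hy => hmin hy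
  have hmaxle : ∀ y ∈ Icc a c, θ y ≤ θ z₂ := fun y hy => hmax hy
  have hJle : ∀ y ∈ Icc a c, |θ' y| ≤ |θ' z₃| := fun y hy => hmax' hy
  -- pointwise bounds for F^2 and G^2
  have hFsq : ∀ y ∈ Icc a c, F y ^ 2 = v y * θ y ^ (2 * m) / κf y := by
    intro y hy
    have h1 := hθpos y hy; have h2 := hvpos y hy; have h3 := hκpos y hy
    have h4 : (0:ℝ) < θ y ^ (2 * m) := Real.rpow_pos_of_pos h1 _
    exact Real.sq_sqrt (by positivity)
  have hGsq : ∀ y ∈ Icc a c, G y ^ 2 = κf y * (θ' y) ^ 2 / (v y * θ y ^ 2) := by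
    intro y hy
    have h1 := hθpos y hy; have h2 := hvpos y hy; have h3 := hκpos y hy
    exact Real.sq_sqrt (by positivity)
  have hFbd : ∀ y ∈ Icc a c,
      F y ^ 2 ≤ (θ z₁ ^ (2 * m - b) + θ z₂ ^ (2 * m - b)) / κ₂ := by
    intro y hy
    rw [hFsq y hy]
    have h1 := hθpos y hy; have h2 := hvpos y hy
    have hθb : (0:ℝ) < θ y ^ b := Real.rpow_pos_of_pos h1 b
    have hθm : (0:ℝ) < θ y ^ (2 * m) := Real.rpow_pos_of_pos h1 _
    have step1 : v y * θ y ^ (2 * m) / κf y ≤ θ y ^ (2 * m - b) / κ₂ := by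
      rw [Real.rpow_sub h1, div_le_div_iff₀ (hκpos y hy) hκ₂, div_mul_eq_mul_div,
        le_div_iff₀ hθb]
      simp only [hκdef]
      nlinarith [mul_pos hθm hκ₁]
    refine step1.trans ?_
    gcongr
    exact rpow_le_add_of_between _ ht₁ (hminle y hy) (hmaxle y hy)
  have hGbd : ∀ y ∈ Icc a c,
      G y ^ 2 ≤ (κ₁ / V₁ + κ₂ * (θ z₁ ^ b + θ z₂ ^ b)) * ((θ' z₃) ^ 2 / θ z₁ ^ 2) := by
    intro y hy
    rw [hGsq y hy]
    have h1 := hθpos y hy; have h2 := hvpos y hy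
    have hrw : κf y * (θ' y) ^ 2 / (v y * θ y ^ 2)
        = (κ₁ / v y + κ₂ * θ y ^ b) * ((θ' y) ^ 2 / θ y ^ 2) := by
      have h2' : v y ≠ 0 := ne_of_gt h2
      have h1' : θ y ≠ 0 := ne_of_gt h1
      simp only [hκdef]
      field_simp
      all_goals first | (exact Or.inl (by ring)) | ring
    rw [hrw]
    have hb1 : κ₁ / v y ≤ κ₁ / V₁ := by gcongr; exact hvV y hy
    have hb2 : θ y ^ b ≤ θ z₁ ^ b + θ z₂ ^ b :=
      rpow_le_add_of_between _ ht₁ (hminle y hy) (hmaxle y hy)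
    have hb3 : (θ' y) ^ 2 ≤ (θ' z₃) ^ 2 := by
      rw [← sq_abs (θ' y), ← sq_abs (θ' z₃)]
      exact pow_le_pow_left₀ (abs_nonneg _) (hJle y hy) 2
    have hb4 : θ z₁ ^ 2 ≤ θ y ^ 2 := pow_le_pow_left₀ ht₁.le (hminle y hy) 2
    have hnum : (θ' y) ^ 2 / θ y ^ 2 ≤ (θ' z₃) ^ 2 / θ z₁ ^ 2 :=
      div_le_div₀ (sq_nonneg _) hb3 (by positivity) hb4
    exact mul_le_mul (add_le_add hb1 (by nlinarith [Real.rpow_pos_of_pos ht₁ b]))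
      hnum (by positivity) (by positivity)
  -- integrability of F^2 and G^2
  have haemem : ∀ᵐ y ∂μ, y ∈ Icc a c := hμdef ▸ ae_restrict_mem hIcc
  have hFsq_int : Integrable (fun y => F y ^ 2) μ := by
    refine Integrable.mono' (integrable_const ((θ z₁ ^ (2 * m - b) + θ z₂ ^ (2 * m - b)) / κ₂))
      ((hFmeas.pow aemeasurable_const).aestronglyMeasurable) ?_
    filter_upwards [haemem] with y hy
    rw [Real.norm_of_nonneg (by positivity)]
    exact hFbd y hy
  have hGsq_int : Integrable (fun y => G y ^ 2) μ := by
    refine Integrable.mono'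
      (integrable_const ((κ₁ / V₁ + κ₂ * (θ z₁ ^ b + θ z₂ ^ b)) * ((θ' z₃) ^ 2 / θ z₁ ^ 2)))
      ((hGmeas.pow aemeasurable_const).aestronglyMeasurable) ?_
    filter_upwards [haemem] with y hy
    rw [Real.norm_of_nonneg (by positivity)]
    exact hGbd y hy
  have hFmem : MemLp F 2 μ :=
    (memLp_two_iff_integrable_sq hFmeas.aestronglyMeasurable).2 hFsq_int
  have hGmem : MemLp G 2 μ :=
    (memLp_two_iff_integrable_sq hGmeas.aestronglyMeasurable).2 hGsq_int
  -- Hölder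
  have hconj : Real.HolderConjugate 2 2 := ⟨by norm_num, by norm_num, by norm_num⟩
  have hFG :=
    integral_mul_le_Lp_mul_Lq_of_nonneg hconj
      (Filter.Eventually.of_forall fun y => Real.sqrt_nonneg _)
      (Filter.Eventually.of_forall fun y => Real.sqrt_nonneg _)
      (by rw [show ENNReal.ofReal (2:ℝ) = 2 from by norm_num]; exact hFmem)
      (by rw [show ENNReal.ofReal (2:ℝ) = 2 from by norm_num]; exact hGmem)
  simp_rw [show ∀ u : ℝ, u ^ (2:ℝ) = u ^ 2 from fun u => by
      rw [show (2:ℝ) = ((2:ℕ):ℝ) by norm_num, Real.rpow_natCast]] at hFG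
  -- bound on ∫ F^2
  have hW_int : Integrable (fun y => 2 ^ (2 * m) * v y / κ₁ + 16 * (θ y - 1) ^ 4 / κ₂) μ := by
    have h1 : Integrable (fun y => 2 ^ (2 * m) / κ₁ * v y) μ := hvint.const_mul _
    have h2 : Integrable (fun y => 16 / κ₂ * (θ y - 1) ^ 4) μ := hθ4int.const_mul _
    have := h1.add h2
    refine this.congr (Filter.Eventually.of_forall fun y => by simp only [Pi.add_apply]; ring)
  have hIF2 : ∫ y, F y ^ 2 ∂μ ≤ 2 ^ (2 * m) * M₁ / κ₁ + 16 * M₂ / κ₂ := by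
    have step : ∫ y, F y ^ 2 ∂μ
        ≤ ∫ y, (2 ^ (2 * m) * v y / κ₁ + 16 * (θ y - 1) ^ 4 / κ₂) ∂μ := by
      refine integral_mono_ae hFsq_int hW_int ?_
      filter_upwards [haemem] with y hy
      rw [hFsq y hy]
      simp only [hκdef]
      exact diss_pointwise m b κ₁ κ₂ hm0 (by linarith) hκ₁ hκ₂ (hvpos y hy) (hθpos y hy)
    refine step.trans ?_
    have e1 : ∫ y, (2 ^ (2 * m) * v y / κ₁ + 16 * (θ y - 1) ^ 4 / κ₂) ∂μ
        = 2 ^ (2 * m) / κ₁ * ∫ y, v y ∂μ + 16 / κ₂ * ∫ y, (θ y - 1) ^ 4 ∂μ := by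
      rw [← integral_const_mul, ← integral_const_mul,
        ← integral_add (hvint.const_mul _) (hθ4int.const_mul _)]
      exact integral_congr_ae (Filter.Eventually.of_forall fun y => by ring)
    rw [e1]
    have p1 : (0:ℝ) ≤ 2 ^ (2 * m) / κ₁ := by positivity
    have p2 : (0:ℝ) ≤ 16 / κ₂ := by positivity
    have := mul_le_mul_of_nonneg_left hvM p1
    have := mul_le_mul_of_nonneg_left hθ4M p2
    have e2 : 2 ^ (2 * m) * M₁ / κ₁ = 2 ^ (2 * m) / κ₁ * M₁ := by ring
    have e3 : 16 * M₂ / κ₂ = 16 / κ₂ * M₂ := by ring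
    linarith
  -- FTC
  have husub : uIcc b₀ x ⊆ Icc a c := uIcc_subset_Icc hb₀ hx
  have hderiv : ∀ y ∈ uIcc b₀ x,
      HasDerivAt (fun t => θ t ^ m) (θ' y * (m * θ y ^ (m - 1))) y :=
    fun y hy => by
      have := (hθd y (husub hy)).rpow_const (p := m) (Or.inl (hθpos y (husub hy)).ne')
      simpa [mul_assoc, mul_comm, mul_left_comm] using this
  have hhcont : ContinuousOn (fun y => θ' y * (m * θ y ^ (m - 1))) (Icc a c) :=
    hθ'c.mul (continuousOn_const.mul (hθc.rpow_const fun y hy => Or.inl (hθpos y hy).ne'))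
  have hint2 : IntervalIntegrable (fun y => θ' y * (m * θ y ^ (m - 1))) volume b₀ x :=
    (hhcont.mono husub).intervalIntegrable
  have heq : θ x ^ m - θ b₀ ^ m = ∫ y in b₀..x, θ' y * (m * θ y ^ (m - 1)) :=
    (intervalIntegral.integral_eq_sub_of_hasDerivAt hderiv hint2).symm
  have habs_int : IntegrableOn (fun y => |θ' y * (m * θ y ^ (m - 1))|) (Icc a c) :=
    hhcont.abs.integrableOn_Icc
  have hsub2 : uIoc b₀ x ⊆ Icc a c := uIoc_subset_uIcc.trans husub
  have habs : |θ x ^ m - θ b₀ ^ m| ≤ ∫ y in Icc a c, |θ' y * (m * θ y ^ (m - 1))| := by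
    rw [heq, ← Real.norm_eq_abs]
    refine le_trans intervalIntegral.norm_integral_le_integral_norm_uIoc ?_
    simp only [Real.norm_eq_abs]
    exact setIntegral_mono_set habs_int
      (Filter.Eventually.of_forall fun y => abs_nonneg _)
      (HasSubset.Subset.eventuallyLE hsub2)
  -- product identity
  have hFGeq : ∀ y ∈ Icc a c, |θ' y * (m * θ y ^ (m - 1))| = m * (F y * G y) := by
    intro y hy
    have h1 := hθpos y hy; have h2 := hvpos y hy; have h3 := hκpos y hy
    have hm1 : (0:ℝ) < θ y ^ (m - 1) := Real.rpow_pos_of_pos h1 _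
    have hm2 : (0:ℝ) < θ y ^ (2 * m) := Real.rpow_pos_of_pos h1 _
    have hprod : F y * G y = θ y ^ (m - 1) * |θ' y| := by
      simp only [hFdef, hGdef]
      rw [← Real.sqrt_mul (by positivity)]
      have hθ2 : θ y ^ (2 * m) = θ y ^ (m - 1) * θ y ^ (m - 1) * θ y ^ (2:ℕ) := by
        have e1 : (2:ℝ) * m = (m - 1) + ((m - 1) + ((2:ℕ):ℝ)) := by push_cast; ring
        rw [e1, Real.rpow_add h1, Real.rpow_add h1, Real.rpow_natCast]
        ring
      have hsq : v y * θ y ^ (2 * m) / κf y * (κf y * (θ' y) ^ 2 / (v y * θ y ^ 2))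
          = (θ y ^ (m - 1) * |θ' y|) ^ 2 := by
        rw [mul_pow, sq_abs, hθ2]
        field_simp
      rw [hsq, Real.sqrt_sq (by positivity)]
    rw [abs_mul, abs_mul, abs_of_nonneg hm0, abs_of_nonneg hm1.le, hprod]
    ring
  have hIcc_eq : ∫ y in Icc a c, |θ' y * (m * θ y ^ (m - 1))| = m * ∫ y, F y * G y ∂μ := by
    rw [← integral_const_mul]
    exact setIntegral_congr_fun hIcc fun y hy => hFGeq y hy
  -- assemble
  have hD_eq : ∫ y, G y ^ 2 ∂μ
      = ∫ y in Icc a c, (κ₁ + κ₂ * v y * θ y ^ b) * (θ' y) ^ 2 / (v y * θ y ^ 2) :=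
    setIntegral_congr_fun hIcc fun y hy => hGsq y hy
  have hF0 : 0 ≤ ∫ y, F y ^ 2 ∂μ := integral_nonneg fun y => sq_nonneg _
  have hD0 : 0 ≤ ∫ y, G y ^ 2 ∂μ := integral_nonneg fun y => sq_nonneg _
  have hsqF : (∫ y, F y ^ 2 ∂μ) ^ ((1:ℝ)/2)
      ≤ Real.sqrt (2 ^ (2 * m) * M₁ / κ₁ + 16 * M₂ / κ₂) := by
    rw [← Real.sqrt_eq_rpow]
    exact Real.sqrt_le_sqrt hIF2
  have hsqG : (∫ y, G y ^ 2 ∂μ) ^ ((1:ℝ)/2)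
      = Real.sqrt (∫ y in Icc a c,
        (κ₁ + κ₂ * v y * θ y ^ b) * (θ' y) ^ 2 / (v y * θ y ^ 2)) := by
    rw [← Real.sqrt_eq_rpow, hD_eq]
  have final : |θ x ^ m - θ b₀ ^ m|
      ≤ (m * Real.sqrt (2 ^ (2 * m) * M₁ / κ₁ + 16 * M₂ / κ₂) + 1)
        * Real.sqrt (∫ y in Icc a c,
          (κ₁ + κ₂ * v y * θ y ^ b) * (θ' y) ^ 2 / (v y * θ y ^ 2)) := by
    have c1 : |θ x ^ m - θ b₀ ^ m| ≤ m * ∫ y, F y * G y ∂μ := hIcc_eq ▸ habs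
    have c2 : m * ∫ y, F y * G y ∂μ
        ≤ m * ((∫ y, F y ^ 2 ∂μ) ^ ((1:ℝ)/2) * (∫ y, G y ^ 2 ∂μ) ^ ((1:ℝ)/2)) :=
      mul_le_mul_of_nonneg_left hFG hm0
    have hDs : (0:ℝ) ≤ (∫ y, G y ^ 2 ∂μ) ^ ((1:ℝ)/2) := by
      rw [← Real.sqrt_eq_rpow]; exact Real.sqrt_nonneg _
    have c3 : m * ((∫ y, F y ^ 2 ∂μ) ^ ((1:ℝ)/2) * (∫ y, G y ^ 2 ∂μ) ^ ((1:ℝ)/2))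
        ≤ m * (Real.sqrt (2 ^ (2 * m) * M₁ / κ₁ + 16 * M₂ / κ₂)
          * (∫ y, G y ^ 2 ∂μ) ^ ((1:ℝ)/2)) := by
      refine mul_le_mul_of_nonneg_left (mul_le_mul_of_nonneg_right hsqF hDs) hm0
    rw [← hsqG]
    have c4 : m * (Real.sqrt (2 ^ (2 * m) * M₁ / κ₁ + 16 * M₂ / κ₂)
        * (∫ y, G y ^ 2 ∂μ) ^ ((1:ℝ)/2))
        = (m * Real.sqrt (2 ^ (2 * m) * M₁ / κ₁ + 16 * M₂ / κ₂))
          * (∫ y, G y ^ 2 ∂μ) ^ ((1:ℝ)/2) := by ring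
    have c5 : (m * Real.sqrt (2 ^ (2 * m) * M₁ / κ₁ + 16 * M₂ / κ₂))
          * (∫ y, G y ^ 2 ∂μ) ^ ((1:ℝ)/2)
        ≤ (m * Real.sqrt (2 ^ (2 * m) * M₁ / κ₁ + 16 * M₂ / κ₂) + 1)
          * (∫ y, G y ^ 2 ∂μ) ^ ((1:ℝ)/2) :=
      mul_le_mul_of_nonneg_right (by linarith) hDs
    linarith
  exact final
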